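/- Define g : (0,1) → ℝ by g(k) = (1 + √(1 − k²))/k + arcsin k. There exists a unique k₀ ∈ (0,1) with g(k₀) = π, and for every k ∈ (0,1) one has g(k) < π if and only if k > k₀; moreover 0.7 < k₀ < 0.75. -/

import Mathlib

open Real Set

private lemma stmt7_deriv {x : ℝ} (hx : x ∈ Set.Ioo (0:ℝ) 1) :
    HasDerivAt (fun k : ℝ => (1 + Real.sqrt (1 - k^2)) / k + Real.arcsin k)
      (((-(2*x) * (1 / (2 * Real.sqrt (1 - x^2)))) * x - (1 + Real.sqrt (1 - x^2)) * 1) / x^2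
        + 1 / Real.sqrt (1 - x^2)) x := by
  obtain ⟨hx0, hx1⟩ := hx
  have h1 : (1:ℝ) - x^2 ≠ 0 := by nlinarith
  have hsq : HasDerivAt (fun k : ℝ => 1 - k^2) (-(2*x)) x := by
    simpa using ((hasDerivAt_pow 2 x).const_sub 1)
  have hs : HasDerivAt (fun k : ℝ => Real.sqrt (1 - k^2))
      (-(2*x) * (1 / (2 * Real.sqrt (1 - x^2)))) x := by
    simpa [mul_comm, Function.comp_def] using (Real.hasDerivAt_sqrt h1).comp x hsq
  have hnum : HasDerivAt (fun k : ℝ => 1 + Real.sqrt (1 - k^2))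
      (-(2*x) * (1 / (2 * Real.sqrt (1 - x^2)))) x := hs.const_add 1
  have hdiv := hnum.div (hasDerivAt_id x) (ne_of_gt hx0)
  have harc := Real.hasDerivAt_arcsin (by linarith : x ≠ -1) (ne_of_lt hx1)
  simpa [Pi.div_def, Pi.add_def] using hdiv.add harc

private lemma stmt7_anti :
    StrictAntiOn (fun k : ℝ => (1 + Real.sqrt (1 - k^2)) / k + Real.arcsin k)
      (Set.Ioo (0:ℝ) 1) := by
  apply strictAntiOn_of_deriv_neg (convex_Ioo 0 1)
  · exact fun x hx => (stmt7_deriv hx).continuousAt.continuousWithinAt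
  · intro x hx
    rw [interior_Ioo] at hx
    rw [(stmt7_deriv hx).deriv]
    obtain ⟨hx0, hx1⟩ := hx
    set s := Real.sqrt (1 - x^2) with hs
    have hs2 : s^2 = 1 - x^2 := Real.sq_sqrt (by nlinarith)
    have hspos : 0 < s := Real.sqrt_pos.2 (by nlinarith)
    have key : ((-(2*x) * (1 / (2 * s))) * x - (1 + s) * 1) / x^2 + 1 / s
        = -((s + s^2) / (x^2 * s)) := by
      field_simp
      nlinarith [hs2]
    rw [key]
    have : 0 < (s + s^2) / (x^2 * s) := by positivity
    linarith

/-- With `g(k) = (1 + √(1 − k²))/k + arcsin k`, there is a unique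
`k₀ ∈ (0,1)` with `g(k₀) = π`; for every `k ∈ (0,1)`, `g k < π ↔ k > k₀`;
moreover `0.7 < k₀ < 0.75`. -/
theorem stmt7 (g : ℝ → ℝ)
    (hg : ∀ k, g k = (1 + Real.sqrt (1 - k^2)) / k + Real.arcsin k) :
    ∃ k₀ : ℝ, k₀ ∈ Set.Ioo (0:ℝ) 1 ∧ g k₀ = Real.pi ∧
      (∀ k ∈ Set.Ioo (0:ℝ) 1, g k = Real.pi → k = k₀) ∧
      (∀ k ∈ Set.Ioo (0:ℝ) 1, (g k < Real.pi ↔ k₀ < k)) ∧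
      0.7 < k₀ ∧ k₀ < 0.75 := by
  have hge : g = fun k : ℝ => (1 + Real.sqrt (1 - k^2)) / k + Real.arcsin k := funext hg
  subst hge
  set f := fun k : ℝ => (1 + Real.sqrt (1 - k^2)) / k + Real.arcsin k with hf
  -- numeric bound at 0.7
  have h7 : Real.pi < f 0.7 := by
    have hsin : Real.sin (Real.arcsin 0.7) = 0.7 := Real.sin_arcsin (by norm_num) (by norm_num)
    have hap : (0:ℝ) < Real.arcsin 0.7 := Real.arcsin_pos.2 (by norm_num)
    have ha : (0.7:ℝ) < Real.arcsin 0.7 := by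
      have := Real.sin_lt hap; rwa [hsin] at this
    set s := Real.sqrt (1 - (0.7:ℝ)^2) with hs
    have hs2 : s^2 = 0.51 := by rw [hs, Real.sq_sqrt] <;> norm_num
    have hs0 : 0 ≤ s := Real.sqrt_nonneg _
    have hslb : (0.714:ℝ) < s := by nlinarith
    have hpi : Real.pi < 3.141593 := Real.pi_lt_d6
    show Real.pi < (1 + s) / 0.7 + Real.arcsin 0.7
    have : (1 + s) / 0.7 = (1 + s) * (10/7) := by ring
    rw [this]
    linarith
  -- numeric bound at 0.75
  have h75 : f 0.75 < Real.pi := by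
    set c := Real.sqrt (1 - (0.75:ℝ)^2) with hc
    have hc2 : c^2 = 0.4375 := by rw [hc, Real.sq_sqrt] <;> norm_num
    have hc0 : 0 ≤ c := Real.sqrt_nonneg _
    have hcub : c < 0.67 := by nlinarith
    have harc : Real.arcsin (0.75:ℝ) = Real.pi/2 - Real.arcsin c := by
      rw [Real.arcsin_eq_pi_div_two_sub_arccos, Real.arccos_eq_arcsin (by norm_num)]
    have hcp : 0 < c := by nlinarith
    have hsin : Real.sin (Real.arcsin c) = c :=
      Real.sin_arcsin (by linarith) (by nlinarith)
    have hap : (0:ℝ) < Real.arcsin c := Real.arcsin_pos.2 hcp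
    have hac : c < Real.arcsin c := by
      have := Real.sin_lt hap; rwa [hsin] at this
    have hpi : (3.141592:ℝ) < Real.pi := Real.pi_gt_d6
    show (1 + c) / 0.75 + Real.arcsin (0.75:ℝ) < Real.pi
    rw [harc]
    have : (1 + c) / 0.75 = (1 + c) * (4/3) := by ring
    rw [this]
    linarith
  -- IVT
  have hsub : Set.Icc (0.7:ℝ) 0.75 ⊆ Set.Ioo (0:ℝ) 1 := fun x hx =>
    ⟨by linarith [hx.1], by linarith [hx.2]⟩
  have hcont : ContinuousOn f (Set.Icc (0.7:ℝ) 0.75) := fun x hx =>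
    (stmt7_deriv (hsub hx)).continuousAt.continuousWithinAt
  have hiv := intermediate_value_Icc' (by norm_num : (0.7:ℝ) ≤ 0.75) hcont
  have hmem : Real.pi ∈ Set.Icc (f 0.75) (f 0.7) := ⟨le_of_lt h75, le_of_lt h7⟩
  obtain ⟨k₀, hk₀I, hk₀⟩ := hiv hmem
  have hk₀lt : 0.7 < k₀ := by
    rcases lt_or_eq_of_le hk₀I.1 with h | h
    · exact h
    · exfalso; rw [← h] at hk₀; linarith
  have hk₀gt : k₀ < 0.75 := by
    rcases lt_or_eq_of_le hk₀I.2 with h | h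
    · exact h
    · exfalso; rw [h] at hk₀; linarith
  have hk₀mem : k₀ ∈ Set.Ioo (0:ℝ) 1 := ⟨by linarith, by linarith⟩
  have hanti : StrictAntiOn f (Set.Ioo (0:ℝ) 1) := stmt7_anti
  refine ⟨k₀, hk₀mem, hk₀, ?_, ?_, hk₀lt, hk₀gt⟩
  · intro k hk hgk
    by_contra hne
    rcases lt_or_gt_of_ne hne with h | h
    · have := hanti hk hk₀mem h; rw [hgk, hk₀] at this; exact lt_irrefl _ this
    · have := hanti hk₀mem hk h; rw [hgk, hk₀] at this; exact lt_irrefl _ this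
  · intro k hk
    constructor
    · intro hlt
      by_contra hle
      push_neg at hle
      rcases lt_or_eq_of_le hle with h | h
      · have := hanti hk hk₀mem h; rw [hk₀] at this; linarith
      · rw [h] at hlt; rw [hk₀] at hlt; exact lt_irrefl _ hlt
    · intro hlt
      have := hanti hk₀mem hk hlt
      rw [hk₀] at this; exact this
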